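/- arXiv:2403.06169 — 2 statements merged into one kernel-verified Lean document; each statement's English description precedes it below -/
import Mathlib

section
/- Let G_0(t, x) = exp(i x²/(4t)) / √(4iπt) for t > 0 and x ∈ ℝ, where √ denotes the principal branch of the complex square root. Then for every ω, x ∈ ℝ and t > 0, the symmetric improper integral lim_{R → +∞} ∫_{−R}^{R} exp( i |ω| |y| ) · G_0(t, x − y) dy exists and equals exp(−i ω² t) · ( cos(|ω| x) + (1/√(4iπt)) ( exp(−i |ω| x) ∫_0^{−x − 2t|ω|} exp(i z²/(4t)) dz − exp(i |ω| x) ∫_0^{−x + 2t|ω|} exp(i z²/(4t)) dz ) ), where ∫_0^Z denotes the oriented interval integral (equal to −∫_Z^0 when Z < 0). -/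
open MeasureTheory intervalIntegral

open Filter Complex

noncomputable section
namespace St16

lemma hasDerivAt_aux (b : ℂ) (hb : b ≠ 0) {z : ℝ} (hz : z ≠ 0) :
    HasDerivAt (fun z : ℝ => Complex.exp (b * (z:ℂ)^2) / (2 * b * z))
      (Complex.exp (b * (z:ℂ)^2) - Complex.exp (b * (z:ℂ)^2) / (2 * b * (z:ℂ)^2)) z := by
  have hz' : (z:ℂ) ≠ 0 := Complex.ofReal_ne_zero.mpr hz
  have hden : 2 * b * (z:ℂ) ≠ 0 := by
    exact mul_ne_zero (mul_ne_zero two_ne_zero hb) hz'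
  have hnum : HasDerivAt (fun w : ℂ => Complex.exp (b * w ^ 2))
      (Complex.exp (b * (z:ℂ)^2) * (b * (2 * (z:ℂ)))) (z:ℂ) := by
    have h0 : HasDerivAt (fun w : ℂ => b * w ^ 2) (b * (2 * (z:ℂ))) (z:ℂ) := by
      simpa using (hasDerivAt_pow 2 (z:ℂ)).const_mul b
    exact h0.cexp
  have hd : HasDerivAt (fun w : ℂ => 2 * b * w) (2 * b) (z:ℂ) := by
    simpa using (hasDerivAt_id (z:ℂ)).const_mul (2 * b)
  have h := (hnum.div hd hden).comp_ofReal
  convert h using 1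
  · rfl
  field_simp

lemma tail_bound {b : ℂ} {a : ℝ} (ha : 0 < a) (hab : a ≤ ‖b‖) (hre : b.re ≤ 0)
    {S R : ℝ} (hS : 0 < S) (hSR : S ≤ R) :
    ‖∫ z in S..R, Complex.exp (b * (z:ℂ)^2)‖ ≤ 3 / (2 * a * S) := by
  have hb : b ≠ 0 := by
    intro h; rw [h] at hab; simp at hab; linarith
  have hexp1 : ∀ z : ℝ, ‖Complex.exp (b * (z:ℂ)^2)‖ ≤ 1 := by
    intro z
    rw [Complex.norm_exp]
    have : (b * (z:ℂ)^2).re = b.re * z^2 := by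
      simp [Complex.mul_re, ← Complex.ofReal_pow, Complex.ofReal_re, Complex.ofReal_im]
    rw [this]
    exact Real.exp_le_one_iff.mpr (mul_nonpos_of_nonpos_of_nonneg hre (sq_nonneg z))
  have habs : ∀ z : ℝ, S ≤ z → ‖2 * b * (z:ℂ)‖ ≥ 2 * a * S := by
    intro z hz
    have : ‖2 * b * (z:ℂ)‖ = 2 * ‖b‖ * |z| := by
      simp [norm_mul, Complex.norm_real, Real.norm_eq_abs]
    rw [this, abs_of_pos (lt_of_lt_of_le hS hz)]
    have h1 : (0:ℝ) < z := lt_of_lt_of_le hS hz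
    nlinarith
  have hSR0 : Set.uIcc S R ⊆ {z : ℝ | z ≠ 0} := by
    rw [Set.uIcc_of_le hSR]; intro z hz; exact ne_of_gt (lt_of_lt_of_le hS hz.1)
  have hcont_exp : Continuous fun z : ℝ => Complex.exp (b * (z:ℂ)^2) := by fun_prop
  have hcont2 : ContinuousOn (fun z : ℝ => Complex.exp (b * (z:ℂ)^2) / (2 * b * (z:ℂ)^2))
      (Set.uIcc S R) := by
    apply ContinuousOn.div hcont_exp.continuousOn (by fun_prop)
    intro z hz
    exact mul_ne_zero (mul_ne_zero two_ne_zero hb)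
      (pow_ne_zero 2 (Complex.ofReal_ne_zero.mpr (hSR0 hz)))
  have hint1 : IntervalIntegrable (fun z : ℝ => Complex.exp (b * (z:ℂ)^2)) volume S R :=
    hcont_exp.intervalIntegrable S R
  have hint2 : IntervalIntegrable (fun z : ℝ => Complex.exp (b * (z:ℂ)^2) / (2 * b * (z:ℂ)^2))
      volume S R := hcont2.intervalIntegrable
  have hftc : ∫ z in S..R,
      (Complex.exp (b * (z:ℂ)^2) - Complex.exp (b * (z:ℂ)^2) / (2 * b * (z:ℂ)^2))
      = Complex.exp (b*(R:ℂ)^2)/(2*b*R) - Complex.exp (b*(S:ℂ)^2)/(2*b*S) :=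
    intervalIntegral.integral_eq_sub_of_hasDerivAt
      (fun z hz => hasDerivAt_aux b hb (hSR0 hz)) (hint1.sub hint2)
  have hmain : ∫ z in S..R, Complex.exp (b * (z:ℂ)^2) =
      (Complex.exp (b*(R:ℂ)^2)/(2*b*R) - Complex.exp (b*(S:ℂ)^2)/(2*b*S)) +
      ∫ z in S..R, Complex.exp (b * (z:ℂ)^2)/(2*b*(z:ℂ)^2) := by
    rw [← hftc, intervalIntegral.integral_sub hint1 hint2]; ring
  have hS' : (0:ℝ) < 2*a*S := by positivity
  have hbd_g : ∀ z : ℝ, S ≤ z → ‖Complex.exp (b*(z:ℂ)^2)/(2*b*(z:ℂ))‖ ≤ 1/(2*a*S) := by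
    intro z hz
    rw [norm_div]
    exact div_le_div₀ one_pos.le (hexp1 z) hS' (habs z hz)
  have hptcorr : ∀ z : ℝ, ‖Complex.exp (b*(z:ℂ)^2)/(2*b*(z:ℂ)^2)‖ ≤ 1/(2*a*z^2) := by
    intro z
    rcases eq_or_ne z 0 with rfl | hz0
    · simp
    · rw [norm_div]
      have hd : ‖2*b*(z:ℂ)^2‖ = 2 * ‖b‖ * z^2 := by
        simp [norm_mul, norm_pow, Complex.norm_real, Real.norm_eq_abs, _root_.sq_abs]
      have hz2 : (0:ℝ) < z^2 := by positivity
      apply div_le_div₀ one_pos.le (hexp1 z) (by positivity)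
      rw [hd]; nlinarith
  have hinv : (∫ z in S..R, 1/(2*a*z^2)) = 1/(2*a) * (S⁻¹ - R⁻¹) := by
    have hder : ∀ z ∈ Set.uIcc S R, HasDerivAt (fun z : ℝ => -(2*a)⁻¹ * z⁻¹) (1/(2*a*z^2)) z := by
      intro z hz
      have hz0 : z ≠ 0 := hSR0 hz
      have := (hasDerivAt_inv hz0).const_mul (-(2*a)⁻¹)
      rw [show (1/(2*a*z^2)) = -(2*a)⁻¹ * -(z^2)⁻¹ by ring]
      exact this
    have hic : IntervalIntegrable (fun z : ℝ => 1/(2*a*z^2)) volume S R := by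
      refine (ContinuousOn.div continuousOn_const (by fun_prop) ?_).intervalIntegrable
      intro z hz
      have hz0 : (0:ℝ) < z := lt_of_lt_of_le hS (by rw [Set.uIcc_of_le hSR] at hz; exact hz.1)
      have h2 := pow_pos hz0 2
      exact ne_of_gt (by nlinarith)
    rw [intervalIntegral.integral_eq_sub_of_hasDerivAt hder hic]
    ring
  have hintcorr : IntervalIntegrable (fun z : ℝ => 1/(2*a*z^2)) volume S R := by
    refine (ContinuousOn.div continuousOn_const (by fun_prop) ?_).intervalIntegrable
    intro z hz
    have hz0 : (0:ℝ) < z := lt_of_lt_of_le hS (by rw [Set.uIcc_of_le hSR] at hz; exact hz.1)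
    have h2 := pow_pos hz0 2
    exact ne_of_gt (by nlinarith)
  have hbd_int : ‖∫ z in S..R, Complex.exp (b*(z:ℂ)^2)/(2*b*(z:ℂ)^2)‖ ≤ 1/(2*a*S) := by
    refine le_trans (intervalIntegral.norm_integral_le_abs_of_norm_le
      (Filter.Eventually.of_forall fun z => hptcorr z) hintcorr) ?_
    rw [hinv]
    have hR0 : (0:ℝ) < R := lt_of_lt_of_le hS hSR
    have h1' : R⁻¹ ≤ S⁻¹ := by
      apply inv_anti₀ hS hSR
    have hnn : (0:ℝ) ≤ 1/(2*a) * (S⁻¹ - R⁻¹) := by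
      have : (0:ℝ) ≤ S⁻¹ - R⁻¹ := by linarith
      positivity
    rw [_root_.abs_of_nonneg hnn]
    have h1 : S⁻¹ - R⁻¹ ≤ S⁻¹ := by
      have : (0:ℝ) ≤ R⁻¹ := by positivity
      linarith
    calc 1/(2*a) * (S⁻¹ - R⁻¹) ≤ 1/(2*a) * S⁻¹ := by
          apply mul_le_mul_of_nonneg_left h1 (by positivity)
      _ = 1/(2*a*S) := by field_simp
  rw [hmain]
  calc ‖Complex.exp (b*(R:ℂ)^2)/(2*b*R) - Complex.exp (b*(S:ℂ)^2)/(2*b*S) +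
        ∫ z in S..R, Complex.exp (b * (z:ℂ)^2)/(2*b*(z:ℂ)^2)‖
      ≤ ‖Complex.exp (b*(R:ℂ)^2)/(2*b*R) - Complex.exp (b*(S:ℂ)^2)/(2*b*S)‖ +
        ‖∫ z in S..R, Complex.exp (b * (z:ℂ)^2)/(2*b*(z:ℂ)^2)‖ := norm_add_le _ _
    _ ≤ (‖Complex.exp (b*(R:ℂ)^2)/(2*b*(R:ℂ))‖ + ‖Complex.exp (b*(S:ℂ)^2)/(2*b*(S:ℂ))‖) +
        ‖∫ z in S..R, Complex.exp (b * (z:ℂ)^2)/(2*b*(z:ℂ)^2)‖ :=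
        add_le_add (norm_sub_le _ _) le_rfl
    _ ≤ (1/(2*a*S) + 1/(2*a*S)) + 1/(2*a*S) := by
        gcongr
        · exact hbd_g R hSR
        · exact hbd_g S (le_refl S)
    _ = 3/(2*a*S) := by ring


lemma eps_diff {a ε R : ℝ} (hε : 0 ≤ ε) (hR : 0 ≤ R) :
    ‖(∫ z in (0:ℝ)..R, Complex.exp ((Complex.I * a - ε) * (z:ℂ)^2)) -
      ∫ z in (0:ℝ)..R, Complex.exp (Complex.I * a * (z:ℂ)^2)‖ ≤ ε * R^3 := by
  have hc1 : Continuous fun z : ℝ => Complex.exp ((Complex.I * a - ε) * (z:ℂ)^2) := by fun_prop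
  have hc2 : Continuous fun z : ℝ => Complex.exp (Complex.I * a * (z:ℂ)^2) := by fun_prop
  rw [← intervalIntegral.integral_sub (hc1.intervalIntegrable 0 R) (hc2.intervalIntegrable 0 R)]
  have hpt : ∀ z ∈ Set.uIoc (0:ℝ) R,
      ‖Complex.exp ((Complex.I * a - ε) * (z:ℂ)^2) - Complex.exp (Complex.I * a * (z:ℂ)^2)‖
        ≤ ε * R^2 := by
    intro z hz
    rw [Set.uIoc_of_le hR] at hz
    have hz0 : 0 < z := hz.1
    have hzR : z ≤ R := hz.2
    have hsplit : Complex.exp ((Complex.I * a - ε) * (z:ℂ)^2) =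
        Complex.exp (Complex.I * a * (z:ℂ)^2) * Complex.exp (((-(ε * z^2) : ℝ) : ℂ)) := by
      rw [← Complex.exp_add]
      congr 1
      push_cast
      ring
    rw [hsplit]
    have habs1 : ‖Complex.exp (Complex.I * a * (z:ℂ)^2)‖ = 1 := by
      rw [Complex.norm_exp]
      have : (Complex.I * a * (z:ℂ)^2).re = 0 := by
        simp [Complex.mul_re, Complex.mul_im, ← Complex.ofReal_pow]
      rw [this, Real.exp_zero]
    calc ‖Complex.exp (Complex.I * a * (z:ℂ)^2) * Complex.exp (((-(ε * z^2) : ℝ) : ℂ)) -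
          Complex.exp (Complex.I * a * (z:ℂ)^2)‖
        = ‖Complex.exp (Complex.I * a * (z:ℂ)^2)‖ *
          ‖Complex.exp (((-(ε * z^2) : ℝ) : ℂ)) - 1‖ := by
          rw [← norm_mul]; congr 1; ring
      _ = ‖Complex.exp (((-(ε * z^2) : ℝ) : ℂ)) - 1‖ := by rw [habs1, one_mul]
      _ = |Real.exp (-(ε * z^2)) - 1| := by
          rw [← Complex.ofReal_exp, ← Complex.ofReal_one, ← Complex.ofReal_sub,
            Complex.norm_real, Real.norm_eq_abs]
      _ ≤ ε * R^2 := by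
          have h1 : Real.exp (-(ε * z^2)) ≤ 1 := by
            apply Real.exp_le_one_iff.mpr
            nlinarith
          have h2 : 1 - ε * z^2 ≤ Real.exp (-(ε * z^2)) := by
            have := Real.add_one_le_exp (-(ε * z^2))
            linarith
          rw [abs_sub_comm, _root_.abs_of_nonneg (by linarith)]
          have h3 : z^2 ≤ R^2 := by nlinarith
          nlinarith
  calc ‖∫ z in (0:ℝ)..R, (Complex.exp ((Complex.I * a - ε) * (z:ℂ)^2) -
        Complex.exp (Complex.I * a * (z:ℂ)^2))‖
      ≤ ε * R^2 * |R - 0| := intervalIntegral.norm_integral_le_of_norm_le_const hpt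
    _ = ε * R^3 := by rw [sub_zero, _root_.abs_of_nonneg hR]; ring

lemma gauss_val {a ε : ℝ} (ha : 0 < a) (hε : 0 < ε) :
    ∫ z in Set.Ioi (0:ℝ), Complex.exp ((Complex.I * a - ε) * (z:ℂ)^2) =
      ((Real.pi : ℂ) / ((ε : ℂ) - Complex.I * a)) ^ ((1:ℂ)/2) / 2 := by
  have hre : 0 < ((ε : ℂ) - Complex.I * a).re := by
    simp [Complex.sub_re, Complex.mul_re, hε]
  have h := integral_gaussian_complex_Ioi hre
  rw [← h]
  congr 1
  ext z
  congr 1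
  ring

lemma integrable_eps {a ε : ℝ} (hε : 0 < ε) :
    Integrable (fun z : ℝ => Complex.exp ((Complex.I * a - ε) * (z:ℂ)^2)) := by
  have hre : (Complex.I * a - ε).re < 0 := by
    simp [Complex.sub_re, Complex.mul_re, hε]
  have := integrable_cexp_quadratic' hre 0 0
  simpa using this


lemma fresnel {a : ℝ} (ha : 0 < a) :
    Filter.Tendsto (fun R : ℝ => ∫ z in (0:ℝ)..R, Complex.exp (Complex.I * a * (z:ℂ)^2)) atTop
      (nhds (((Real.pi : ℂ) / (-(Complex.I * a))) ^ ((1:ℂ)/2) / 2)) := by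
  set L : ℂ := ((Real.pi : ℂ) / (-(Complex.I * a))) ^ ((1:ℂ)/2) / 2 with hL
  have ha' : (a:ℂ) ≠ 0 := Complex.ofReal_ne_zero.mpr ha.ne'
  have key : ∀ R : ℝ, 0 < R →
      ‖(∫ z in (0:ℝ)..R, Complex.exp (Complex.I * a * (z:ℂ)^2)) - L‖ ≤ 3 / (2*a*R) := by
    intro R hR
    have hbound : ∀ ε : ℝ, 0 < ε →
        ‖(∫ z in (0:ℝ)..R, Complex.exp (Complex.I * a * (z:ℂ)^2)) - L‖ ≤
          ε * R^3 + 3/(2*a*R) +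
          ‖((Real.pi:ℂ)/((ε:ℂ) - Complex.I*a))^((1:ℂ)/2)/2 - L‖ := by
      intro ε hε
      have habs : a ≤ ‖Complex.I * a - ε‖ := by
        have him : (Complex.I * (a:ℂ) - ε).im = a := by simp [Complex.mul_im]
        calc a = |(Complex.I * (a:ℂ) - ε).im| := by rw [him, _root_.abs_of_pos ha]
          _ ≤ _ := Complex.abs_im_le_norm _
      have hre : (Complex.I * (a:ℂ) - ε).re ≤ 0 := by
        simp [Complex.sub_re, Complex.mul_re, hε.le]
      set F := ∫ z in (0:ℝ)..R, Complex.exp (Complex.I * a * (z:ℂ)^2) with hF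
      set GR := ∫ z in (0:ℝ)..R, Complex.exp ((Complex.I * a - ε) * (z:ℂ)^2) with hGR
      set Gi := ∫ z in Set.Ioi (0:ℝ), Complex.exp ((Complex.I * a - ε) * (z:ℂ)^2) with hGi
      have h1 : ‖F - GR‖ ≤ ε * R^3 := by
        rw [norm_sub_rev]; exact eps_diff hε.le hR.le
      have h2 : ‖GR - Gi‖ ≤ 3/(2*a*R) := by
        have htend : Tendsto (fun R' : ℝ => (∫ z in (0:ℝ)..R',
            Complex.exp ((Complex.I * a - ε) * (z:ℂ)^2)) - GR) atTop (nhds (Gi - GR)) :=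
          (intervalIntegral_tendsto_integral_Ioi 0
            (integrable_eps hε).integrableOn tendsto_id).sub tendsto_const_nhds
        have hev : ∀ᶠ R' in (atTop : Filter ℝ), ‖(∫ z in (0:ℝ)..R',
            Complex.exp ((Complex.I * a - ε) * (z:ℂ)^2)) - GR‖ ≤ 3/(2*a*R) := by
          filter_upwards [eventually_ge_atTop R] with R' hR'
          have hadd : GR + (∫ z in R..R', Complex.exp ((Complex.I * a - ε) * (z:ℂ)^2)) =
              ∫ z in (0:ℝ)..R', Complex.exp ((Complex.I * a - ε) * (z:ℂ)^2) := by
            apply intervalIntegral.integral_add_adjacent_intervals <;>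
              exact ((by fun_prop :
                Continuous fun z : ℝ => Complex.exp ((Complex.I * a - ε) * (z:ℂ)^2))).intervalIntegrable _ _
          rw [← hadd]
          simpa using tail_bound ha habs hre hR hR'
        have h := le_of_tendsto htend.norm hev
        rw [norm_sub_rev]; exact h
      have h3 : Gi = ((Real.pi:ℂ)/((ε:ℂ) - Complex.I*a))^((1:ℂ)/2)/2 := gauss_val ha hε
      have tri : ‖F - L‖ ≤ ‖F - GR‖ + ‖GR - Gi‖ + ‖Gi - L‖ := by
        rw [← dist_eq_norm, ← dist_eq_norm, ← dist_eq_norm, ← dist_eq_norm]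
        exact dist_triangle4 F GR Gi L
      refine tri.trans (add_le_add (add_le_add h1 h2) (le_of_eq (by rw [h3])))
    have hne0 : ((0:ℝ):ℂ) - Complex.I * a ≠ 0 := by
      intro h
      have h2 : ((((0:ℝ):ℂ)) - Complex.I * a).im = -a := by simp [Complex.mul_im]
      rw [h] at h2; simp at h2; exact ha.ne' h2
    have hsl : ((Real.pi:ℂ)/(((0:ℝ):ℂ) - Complex.I*a)) ∈ Complex.slitPlane := by
      rw [Complex.mem_slitPlane_iff]
      right
      have hid : ((Real.pi:ℂ)/(((0:ℝ):ℂ) - Complex.I*a)) = Complex.I * ((Real.pi/a : ℝ):ℂ) := by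
        rw [div_eq_iff hne0]
        push_cast
        field_simp
        rw [mul_comm]
        ring_nf
        rw [Complex.I_sq]
        ring
      rw [hid]
      simp only [Complex.mul_im, Complex.I_re, Complex.I_im, Complex.ofReal_re,
        Complex.ofReal_im, one_mul, zero_mul, add_zero]
      positivity
    have hbasec : ContinuousAt (fun ε : ℝ => ((Real.pi:ℂ)/((ε:ℂ) - Complex.I*a))) 0 := by
      apply ContinuousAt.div continuousAt_const
      · exact (Complex.continuous_ofReal.continuousAt).sub continuousAt_const
      · exact hne0
    have hcomb : ContinuousAt
        (fun ε : ℝ => ((Real.pi:ℂ)/((ε:ℂ) - Complex.I*a))^((1:ℂ)/2)/2) 0 :=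
      (ContinuousAt.comp (g := fun w : ℂ => w ^ ((1:ℂ)/2)) (x := (0:ℝ))
        (f := fun ε : ℝ => ((Real.pi:ℂ)/((ε:ℂ) - Complex.I*a)))
        (continuousAt_cpow_const hsl) hbasec).div_const 2
    have hnorm : Tendsto (fun ε : ℝ =>
        ‖((Real.pi:ℂ)/((ε:ℂ) - Complex.I*a))^((1:ℂ)/2)/2 - L‖) (nhds 0) (nhds 0) := by
      have h := (hcomb.tendsto.sub (tendsto_const_nhds (x := L))).norm
      have hval : ((Real.pi:ℂ)/(((0:ℝ):ℂ) - Complex.I*a))^((1:ℂ)/2)/2 - L = 0 := by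
        rw [hL]
        norm_num
      rw [hval, norm_zero] at h
      exact h
    have htot : Tendsto (fun ε : ℝ => ε * R^3 + 3/(2*a*R) +
        ‖((Real.pi:ℂ)/((ε:ℂ) - Complex.I*a))^((1:ℂ)/2)/2 - L‖)
        (nhdsWithin 0 (Set.Ioi 0)) (nhds (3/(2*a*R))) := by
      have h1 : Tendsto (fun ε : ℝ => ε * R^3) (nhds 0) (nhds 0) := by
        have := (continuous_id.mul (continuous_const (y := R^3))).tendsto 0
        simpa [Pi.mul_def] using this
      have := (h1.add (tendsto_const_nhds (x := 3/(2*a*R)))).add hnorm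
      simp only [zero_add, add_zero] at this
      exact this.mono_left nhdsWithin_le_nhds
    exact ge_of_tendsto htot (by
      filter_upwards [self_mem_nhdsWithin] with ε hε
      exact hbound ε hε)
  have h0 : Tendsto (fun R : ℝ =>
      (∫ z in (0:ℝ)..R, Complex.exp (Complex.I * a * (z:ℂ)^2)) - L) atTop (nhds 0) := by
    have h2 : Tendsto (fun R : ℝ => 2*a*R) atTop atTop :=
      Tendsto.const_mul_atTop (by positivity) tendsto_id
    have h3 : Tendsto (fun R : ℝ => 3/(2*a*R)) atTop (nhds 0) :=
      tendsto_const_nhds.div_atTop h2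
    exact squeeze_zero_norm'
      (by filter_upwards [eventually_gt_atTop 0] with R hR using key R hR) h3
  have := h0.add (tendsto_const_nhds (x := L))
  simpa using this


lemma fresnel_t {t : ℝ} (ht : 0 < t) :
    Filter.Tendsto (fun R : ℝ => ∫ z in (0:ℝ)..R,
        Complex.exp (Complex.I * ((z^2 : ℝ):ℂ) / (4*(t:ℂ)))) atTop
      (nhds ((4*(Real.pi:ℂ)*Complex.I*(t:ℂ))^((1:ℂ)/2)/2)) := by
  have ha : 0 < 1/(4*t) := by positivity
  have ht' : (t:ℂ) ≠ 0 := Complex.ofReal_ne_zero.mpr ht.ne'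
  have h := fresnel ha
  have hint : ∀ R : ℝ, (∫ z in (0:ℝ)..R, Complex.exp (Complex.I * ((z^2 : ℝ):ℂ) / (4*(t:ℂ)))) =
      ∫ z in (0:ℝ)..R, Complex.exp (Complex.I * ((1/(4*t) : ℝ):ℂ) * (z:ℂ)^2) := by
    intro R
    apply intervalIntegral.integral_congr
    intro z _
    have hz : Complex.I * ((z^2 : ℝ):ℂ) / (4*(t:ℂ)) = Complex.I * ((1/(4*t) : ℝ):ℂ) * (z:ℂ)^2 := by
      push_cast
      field_simp
    exact congrArg Complex.exp hz
  have hval : ((Real.pi : ℂ) / (-(Complex.I * ((1/(4*t):ℝ):ℂ)))) = 4*(Real.pi:ℂ)*Complex.I*t := by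
    have hne : (-(Complex.I * ((1/(4*t):ℝ):ℂ))) ≠ 0 := by
      apply neg_ne_zero.mpr
      apply mul_ne_zero Complex.I_ne_zero
      push_cast
      apply one_div_ne_zero
      simpa using ht'
    rw [div_eq_iff hne]
    push_cast
    field_simp
    ring_nf
    rw [Complex.I_sq]
    ring
  simp only [hint]
  rw [show (4*(Real.pi:ℂ)*Complex.I*(t:ℂ)) =
    ((Real.pi : ℂ) / (-(Complex.I * ((1/(4*t):ℝ):ℂ)))) from hval.symm]
  exact h

end St16

open St16

/-- (Lemma 4.3) The Schrödinger evolution of the signal `y ↦ exp(i|ω||y|)` (frequency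
sign switch at the origin): the symmetric improper integral against
`G_0(t, x-y) = exp(i(x-y)²/(4t))/√(4iπt)` exists and equals
`e^{-iω²t}(cos(|ω|x) + (1/√(4iπt))(e^{-i|ω|x} ∫_0^{-x-2t|ω|} e^{iz²/4t} dz
- e^{i|ω|x} ∫_0^{-x+2t|ω|} e^{iz²/4t} dz))`. -/
theorem statement_16 (ω x t : ℝ) (ht : 0 < t) :
    Filter.Tendsto
      (fun Rad : ℝ => ∫ y in (-Rad)..Rad,
        Complex.exp (Complex.I * ((|ω| * |y| : ℝ) : ℂ)) *
          (Complex.exp (Complex.I * (((x - y) ^ 2 : ℝ) : ℂ) / (4 * (t : ℂ))) /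
            (4 * (Real.pi : ℂ) * Complex.I * (t : ℂ)) ^ ((1 : ℂ) / 2)))
      Filter.atTop
      (nhds (Complex.exp (-Complex.I * ((ω ^ 2 * t : ℝ) : ℂ)) *
        (((Real.cos (|ω| * x) : ℝ) : ℂ) +
          ((4 * (Real.pi : ℂ) * Complex.I * (t : ℂ)) ^ ((1 : ℂ) / 2))⁻¹ *
            (Complex.exp (-Complex.I * ((|ω| * x : ℝ) : ℂ)) *
                (∫ z in (0 : ℝ)..(-x - 2 * t * |ω|),
                  Complex.exp (Complex.I * ((z ^ 2 : ℝ) : ℂ) / (4 * (t : ℂ)))) -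
              Complex.exp (Complex.I * ((|ω| * x : ℝ) : ℂ)) *
                ∫ z in (0 : ℝ)..(-x + 2 * t * |ω|),
                  Complex.exp (Complex.I * ((z ^ 2 : ℝ) : ℂ) / (4 * (t : ℂ))))))) := by
  have ht' : (t:ℂ) ≠ 0 := Complex.ofReal_ne_zero.mpr ht.ne'
  set C : ℂ := (4*(Real.pi:ℂ)*Complex.I*(t:ℂ))^((1:ℂ)/2) with hCdef
  have hbase : (4*(Real.pi:ℂ)*Complex.I*(t:ℂ)) ≠ 0 := by
    apply mul_ne_zero (mul_ne_zero (mul_ne_zero ?_ ?_) Complex.I_ne_zero) ht'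
    · norm_num
    · exact Complex.ofReal_ne_zero.mpr Real.pi_ne_zero
  have hC : C ≠ 0 := by
    rw [hCdef, Complex.cpow_def_of_ne_zero hbase]; exact Complex.exp_ne_zero _
  set g : ℝ → ℂ := fun z => Complex.exp (Complex.I * ((z^2:ℝ):ℂ) / (4*(t:ℂ))) with hgdef
  have hgc : Continuous g := by rw [hgdef]; fun_prop
  set f : ℝ → ℂ := fun y => Complex.exp (Complex.I * ((|ω| * |y| : ℝ):ℂ)) *
    (Complex.exp (Complex.I * (((x - y)^2 : ℝ):ℂ) / (4*(t:ℂ))) / C) with hfdef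
  have hfc : Continuous f := by rw [hfdef]; fun_prop
  set k1 : ℝ := x - 2*t*|ω| with hk1
  set k2 : ℝ := x + 2*t*|ω| with hk2
  set K1 : ℂ := Complex.exp (-Complex.I * ((ω^2*t : ℝ):ℂ)) *
    Complex.exp (Complex.I * ((|ω| * x : ℝ):ℂ)) * C⁻¹ with hK1
  set K2 : ℂ := Complex.exp (-Complex.I * ((ω^2*t : ℝ):ℂ)) *
    Complex.exp (-Complex.I * ((|ω| * x : ℝ):ℂ)) * C⁻¹ with hK2
  set A : ℂ := ∫ z in (0:ℝ)..(-x + 2*t*|ω|), g z with hA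
  set B : ℂ := ∫ z in (0:ℝ)..(-x - 2*t*|ω|), g z with hB
  have hgeven : ∀ S : ℝ, (∫ z in (0:ℝ)..(-S), g z) = - ∫ z in (0:ℝ)..S, g z := by
    intro S
    have h1 : (∫ z in (0:ℝ)..S, g (-z)) = ∫ z in (-S)..(0:ℝ), g z := by
      simpa using intervalIntegral.integral_comp_neg (a := (0:ℝ)) (b := S) (f := g)
    have h2 : ∀ z : ℝ, g (-z) = g z := by
      intro z
      simp only [hgdef, neg_sq]
    rw [intervalIntegral.integral_symm]
    rw [← h1]
    congr 1
    exact intervalIntegral.integral_congr fun z _ => h2 z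
  have hpt1 : ∀ y : ℝ, 0 ≤ y → f y = K1 * g (y - k1) := by
    intro y hy
    simp only [hfdef, hK1, hgdef, hk1]
    rw [_root_.abs_of_nonneg hy, div_eq_mul_inv, ← mul_assoc, ← Complex.exp_add]
    rw [show Complex.I * ((|ω| * y : ℝ):ℂ) + Complex.I * (((x - y)^2 : ℝ):ℂ)/(4*(t:ℂ)) =
        (-Complex.I * ((ω^2*t : ℝ):ℂ) + Complex.I * ((|ω| * x : ℝ):ℂ)) +
        Complex.I * (((y - (x - 2*t*|ω|))^2 : ℝ):ℂ)/(4*(t:ℂ)) from ?_]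
    · rw [Complex.exp_add, Complex.exp_add]; ring
    · rw [show (ω:ℝ)^2 = |ω|^2 from (_root_.sq_abs ω).symm]
      push_cast
      field_simp
      ring
  have hpt2 : ∀ y : ℝ, y ≤ 0 → f y = K2 * g (y - k2) := by
    intro y hy
    simp only [hfdef, hK2, hgdef, hk2]
    rw [_root_.abs_of_nonpos hy, div_eq_mul_inv, ← mul_assoc, ← Complex.exp_add]
    rw [show Complex.I * ((|ω| * -y : ℝ):ℂ) + Complex.I * (((x - y)^2 : ℝ):ℂ)/(4*(t:ℂ)) =
        (-Complex.I * ((ω^2*t : ℝ):ℂ) + -Complex.I * ((|ω| * x : ℝ):ℂ)) +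
        Complex.I * (((y - (x + 2*t*|ω|))^2 : ℝ):ℂ)/(4*(t:ℂ)) from ?_]
    · rw [Complex.exp_add, Complex.exp_add]; ring
    · rw [show (ω:ℝ)^2 = |ω|^2 from (_root_.sq_abs ω).symm]
      push_cast
      field_simp
      ring
  have hsplit : ∀ R : ℝ, 0 ≤ R → (∫ y in (-R)..R, f y) =
      K2 * ((∫ z in (0:ℝ)..(R + k2), g z) + B) + K1 * ((∫ z in (0:ℝ)..(R - k1), g z) - A) := by
    intro R hR
    have hadd : (∫ y in (-R)..(0:ℝ), f y) + (∫ y in (0:ℝ)..R, f y) = ∫ y in (-R)..R, f y :=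
      intervalIntegral.integral_add_adjacent_intervals
        (hfc.intervalIntegrable _ _) (hfc.intervalIntegrable _ _)
    rw [← hadd]
    have hpos : (∫ y in (0:ℝ)..R, f y) = K1 * ((∫ z in (0:ℝ)..(R - k1), g z) - A) := by
      have hcongr : (∫ y in (0:ℝ)..R, f y) = ∫ y in (0:ℝ)..R, K1 * g (y - k1) := by
        apply intervalIntegral.integral_congr
        intro y hy
        rw [Set.uIcc_of_le hR] at hy
        exact hpt1 y hy.1
      rw [hcongr, intervalIntegral.integral_const_mul]
      congr 1
      rw [intervalIntegral.integral_comp_sub_right g k1, zero_sub]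
      rw [← intervalIntegral.integral_add_adjacent_intervals (a := -k1) (b := (0:ℝ))
        (c := R - k1) (hgc.intervalIntegrable _ _) (hgc.intervalIntegrable _ _)]
      rw [intervalIntegral.integral_symm]
      rw [show -k1 = -x + 2*t*|ω| by rw [hk1]; ring]
      rw [← hA]
      ring
    have hneg : (∫ y in (-R)..(0:ℝ), f y) = K2 * ((∫ z in (0:ℝ)..(R + k2), g z) + B) := by
      have hcongr : (∫ y in (-R)..(0:ℝ), f y) = ∫ y in (-R)..(0:ℝ), K2 * g (y - k2) := by
        apply intervalIntegral.integral_congr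
        intro y hy
        rw [Set.uIcc_of_le (by linarith : -R ≤ (0:ℝ))] at hy
        exact hpt2 y hy.2
      rw [hcongr, intervalIntegral.integral_const_mul]
      congr 1
      rw [intervalIntegral.integral_comp_sub_right g k2, zero_sub]
      rw [← intervalIntegral.integral_add_adjacent_intervals (a := -R - k2) (b := (0:ℝ))
        (c := -k2) (hgc.intervalIntegrable _ _) (hgc.intervalIntegrable _ _)]
      rw [intervalIntegral.integral_symm]
      rw [show -R - k2 = -(R + k2) by ring]
      rw [hgeven (R + k2)]
      rw [show -k2 = -x - 2*t*|ω| by rw [hk2]; ring]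
      rw [← hB]
      ring
    rw [hpos, hneg]
  have hfr := fresnel_t ht
  rw [← hCdef] at hfr
  have h1 : Tendsto (fun R : ℝ => ∫ z in (0:ℝ)..(R - k1), g z) atTop (nhds (C/2)) := by
    have := hfr.comp (tendsto_atTop_add_const_right atTop (-k1) tendsto_id)
    simpa [sub_eq_add_neg, hgdef, Function.comp_def] using this
  have h2 : Tendsto (fun R : ℝ => ∫ z in (0:ℝ)..(R + k2), g z) atTop (nhds (C/2)) := by
    have := hfr.comp (tendsto_atTop_add_const_right atTop k2 tendsto_id)
    simpa [hgdef, Function.comp_def] using this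
  have hΦ : Tendsto (fun R : ℝ => K2 * ((∫ z in (0:ℝ)..(R + k2), g z) + B) +
      K1 * ((∫ z in (0:ℝ)..(R - k1), g z) - A)) atTop
      (nhds (K2 * (C/2 + B) + K1 * (C/2 - A))) :=
    ((h2.add tendsto_const_nhds).const_mul K2).add ((h1.sub tendsto_const_nhds).const_mul K1)
  have heq : (fun R : ℝ => K2 * ((∫ z in (0:ℝ)..(R + k2), g z) + B) +
      K1 * ((∫ z in (0:ℝ)..(R - k1), g z) - A)) =ᶠ[atTop]
      (fun Rad : ℝ => ∫ y in (-Rad)..Rad, f y) := by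
    filter_upwards [eventually_ge_atTop (0:ℝ)] with R hR
    exact (hsplit R hR).symm
  have hcos : ((Real.cos (|ω| * x) : ℝ) : ℂ) =
      (Complex.exp (Complex.I * ((|ω| * x : ℝ):ℂ)) + Complex.exp (-Complex.I * ((|ω| * x : ℝ):ℂ)))/2 := by
    rw [Complex.ofReal_cos]
    rw [show Complex.cos ((|ω| * x : ℝ):ℂ) =
      (Complex.exp (((|ω| * x : ℝ):ℂ) * Complex.I) +
        Complex.exp (-((|ω| * x : ℝ):ℂ) * Complex.I))/2 from rfl]
    ring_nf
  have hfinal : K2 * (C/2 + B) + K1 * (C/2 - A) =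
      Complex.exp (-Complex.I * ((ω^2*t : ℝ):ℂ)) * (((Real.cos (|ω| * x) : ℝ):ℂ) +
        C⁻¹ * (Complex.exp (-Complex.I*((|ω| * x:ℝ):ℂ)) * B -
          Complex.exp (Complex.I*((|ω| * x:ℝ):ℂ)) * A)) := by
    rw [hcos, hK1, hK2]
    field_simp
    ring
  have hres := hΦ.congr' heq
  rw [hfinal] at hres
  exact hres
end
end

section
/- For every real number a, the sequence of functions F_N(x, a) = Σ_{ν=0}^N binom(N, ν) ((1−a)/2)^ν ((1+a)/2)^{N−ν} e^{i (1 − 2ν/N) x} converges, as N → ∞, to x ↦ e^{iax}, uniformly on every compact subset of ℝ. -/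
open MeasureTheory

open Complex Finset Filter

private lemma so_pow_sub_pow {u v : ℂ} {r : ℝ} (hu : ‖u‖ ≤ r) (hv : ‖v‖ ≤ r) :
    ∀ n : ℕ, ‖u ^ (n + 1) - v ^ (n + 1)‖ ≤ (n + 1) * r ^ n * ‖u - v‖ := by
  have hr : 0 ≤ r := le_trans (norm_nonneg u) hu
  intro n
  induction n with
  | zero => simp [pow_one]
  | succ n ih =>
    have key : u ^ (n + 2) - v ^ (n + 2)
        = u * (u ^ (n + 1) - v ^ (n + 1)) + (u - v) * v ^ (n + 1) := by ring
    calc ‖u ^ (n + 2) - v ^ (n + 2)‖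
        ≤ ‖u * (u ^ (n + 1) - v ^ (n + 1))‖ + ‖(u - v) * v ^ (n + 1)‖ := by
          rw [key]; exact norm_add_le _ _
      _ = ‖u‖ * ‖u ^ (n + 1) - v ^ (n + 1)‖ + ‖u - v‖ * ‖v‖ ^ (n + 1) := by
          rw [norm_mul, norm_mul, norm_pow]
      _ ≤ r * (((n : ℝ) + 1) * r ^ n * ‖u - v‖) + ‖u - v‖ * r ^ (n + 1) := by
          gcongr
      _ = ((n : ℝ) + 1 + 1) * r ^ (n + 1) * ‖u - v‖ := by ring
      _ = (↑(n + 1) + 1) * r ^ (n + 1) * ‖u - v‖ := by push_cast; ring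

private lemma so_pow_sub_pow' {u v : ℂ} {r : ℝ} (hu : ‖u‖ ≤ r) (hv : ‖v‖ ≤ r)
    {n : ℕ} (hn : n ≠ 0) : ‖u ^ n - v ^ n‖ ≤ n * r ^ (n - 1) * ‖u - v‖ := by
  obtain ⟨m, rfl⟩ := Nat.exists_eq_succ_of_ne_zero hn
  have := so_pow_sub_pow hu hv m
  simpa [Nat.succ_sub_one] using this

private lemma so_sum_eq_pow (a x : ℝ) {N : ℕ} (hN : N ≠ 0) :
    ∑ ν ∈ Finset.range (N + 1),
        (N.choose ν : ℂ) * (((1 - a) / 2 : ℝ) : ℂ) ^ ν * (((1 + a) / 2 : ℝ) : ℂ) ^ (N - ν) *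
          Complex.exp (Complex.I * ((1 - 2 * (ν : ℝ) / (N : ℝ) : ℝ) : ℂ) * (x : ℂ))
      = ((((1 - a) / 2 : ℝ) : ℂ) * Complex.exp (-(Complex.I * x) / N)
          + (((1 + a) / 2 : ℝ) : ℂ) * Complex.exp ((Complex.I * x) / N)) ^ N := by
  rw [add_pow]
  refine Finset.sum_congr rfl fun ν hν => ?_
  have hν' : ν ≤ N := Nat.lt_succ_iff.mp (Finset.mem_range.mp hν)
  have hN' : (N : ℂ) ≠ 0 := Nat.cast_ne_zero.mpr hN
  rw [mul_pow, mul_pow, ← Complex.exp_nat_mul, ← Complex.exp_nat_mul]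
  have h3 : Complex.exp ((ν : ℂ) * (-(Complex.I * x) / N)) *
      Complex.exp (((N - ν : ℕ) : ℂ) * ((Complex.I * x) / N))
      = Complex.exp (Complex.I * ((1 - 2 * (ν : ℝ) / (N : ℝ) : ℝ) : ℂ) * (x : ℂ)) := by
    rw [← Complex.exp_add]
    congr 1
    have hsub : ((N - ν : ℕ) : ℂ) = (N : ℂ) - ν := by
      push_cast [hν']; ring
    rw [hsub]
    push_cast
    field_simp
    ring
  rw [← h3]
  ring

private lemma so_g_close (a x : ℝ) {N : ℕ} (hN : N ≠ 0)
    (h1 : |x| / N ≤ 1) (h2 : |a| * (|x| / N) ≤ 1) :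
    ‖(((1 - a) / 2 : ℝ) : ℂ) * Complex.exp (-(Complex.I * x) / N)
        + (((1 + a) / 2 : ℝ) : ℂ) * Complex.exp ((Complex.I * x) / N)
        - Complex.exp (Complex.I * a * x / N)‖
      ≤ (1 + |a| + a ^ 2) * (|x| / N) ^ 2 := by
  set z : ℂ := (Complex.I * x) / N with hz
  have hNpos : (0 : ℝ) < N := by exact_mod_cast Nat.pos_of_ne_zero hN
  have hzn : ‖z‖ = |x| / N := by
    rw [hz]
    simp [norm_div, norm_mul]
  have hzn' : ‖-z‖ = |x| / N := by rw [norm_neg, hzn]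
  have hazn : ‖(a : ℂ) * z‖ = |a| * (|x| / N) := by
    rw [norm_mul, hzn, Complex.norm_real, Real.norm_eq_abs]
  set E₁ : ℂ := Complex.exp z - 1 - z with hE₁
  set E₂ : ℂ := Complex.exp (-z) - 1 - (-z) with hE₂
  set E₃ : ℂ := Complex.exp ((a : ℂ) * z) - 1 - (a : ℂ) * z with hE₃
  have b₁ : ‖E₁‖ ≤ (|x| / N) ^ 2 := by
    have := Complex.norm_exp_sub_one_sub_id_le (x := z) (by rwa [hzn])
    rwa [hzn] at this
  have b₂ : ‖E₂‖ ≤ (|x| / N) ^ 2 := by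
    have := Complex.norm_exp_sub_one_sub_id_le (x := -z) (by rwa [hzn'])
    rwa [hzn'] at this
  have b₃ : ‖E₃‖ ≤ (|a| * (|x| / N)) ^ 2 := by
    have := Complex.norm_exp_sub_one_sub_id_le (x := (a : ℂ) * z)
      (by rwa [hazn])
    rwa [hazn] at this
  have key : (((1 - a) / 2 : ℝ) : ℂ) * Complex.exp (-(Complex.I * x) / N)
      + (((1 + a) / 2 : ℝ) : ℂ) * Complex.exp ((Complex.I * x) / N)
      - Complex.exp (Complex.I * a * x / N)
      = (((1 - a) / 2 : ℝ) : ℂ) * E₂ + (((1 + a) / 2 : ℝ) : ℂ) * E₁ - E₃ := by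
    have hneg : -(Complex.I * (x : ℂ)) / N = -z := by rw [hz]; ring
    have haz : Complex.I * (a : ℂ) * x / N = (a : ℂ) * z := by rw [hz]; ring
    rw [hneg, haz, hE₁, hE₂, hE₃]
    push_cast
    ring
  rw [key]
  have hc : ‖(((1 - a) / 2 : ℝ) : ℂ)‖ ≤ (1 + |a|) / 2 := by
    rw [Complex.norm_real, Real.norm_eq_abs, abs_div, _root_.abs_two]
    gcongr
    calc |1 - a| = |1 + -a| := by rw [sub_eq_add_neg]
      _ ≤ |(1 : ℝ)| + |-a| := abs_add_le _ _
      _ = 1 + |a| := by rw [abs_one, abs_neg]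
  have hc' : ‖(((1 + a) / 2 : ℝ) : ℂ)‖ ≤ (1 + |a|) / 2 := by
    rw [Complex.norm_real, Real.norm_eq_abs, abs_div, _root_.abs_two]
    gcongr
    calc |1 + a| ≤ |(1 : ℝ)| + |a| := abs_add_le _ _
      _ = 1 + |a| := by rw [abs_one]
  have step : ‖(((1 - a) / 2 : ℝ) : ℂ) * E₂ + (((1 + a) / 2 : ℝ) : ℂ) * E₁ - E₃‖
      ≤ ‖(((1 - a) / 2 : ℝ) : ℂ)‖ * ‖E₂‖ + ‖(((1 + a) / 2 : ℝ) : ℂ)‖ * ‖E₁‖ + ‖E₃‖ := by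
    calc ‖(((1 - a) / 2 : ℝ) : ℂ) * E₂ + (((1 + a) / 2 : ℝ) : ℂ) * E₁ - E₃‖
        ≤ ‖(((1 - a) / 2 : ℝ) : ℂ) * E₂ + (((1 + a) / 2 : ℝ) : ℂ) * E₁‖ + ‖E₃‖ :=
          norm_sub_le _ _
      _ ≤ ‖(((1 - a) / 2 : ℝ) : ℂ) * E₂‖ + ‖(((1 + a) / 2 : ℝ) : ℂ) * E₁‖ + ‖E₃‖ := by
          gcongr
          exact norm_add_le _ _
      _ = ‖(((1 - a) / 2 : ℝ) : ℂ)‖ * ‖E₂‖ + ‖(((1 + a) / 2 : ℝ) : ℂ)‖ * ‖E₁‖ + ‖E₃‖ := by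
          rw [norm_mul, norm_mul]
  have t1 : ‖(((1 - a) / 2 : ℝ) : ℂ)‖ * ‖E₂‖ ≤ (1 + |a|) / 2 * (|x| / N) ^ 2 :=
    mul_le_mul hc b₂ (norm_nonneg _) (by positivity)
  have t2 : ‖(((1 + a) / 2 : ℝ) : ℂ)‖ * ‖E₁‖ ≤ (1 + |a|) / 2 * (|x| / N) ^ 2 :=
    mul_le_mul hc' b₁ (norm_nonneg _) (by positivity)
  have t3 : (|a| * (|x| / N)) ^ 2 = a ^ 2 * (|x| / N) ^ 2 := by
    rw [mul_pow, _root_.sq_abs]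
  rw [t3] at b₃
  calc ‖(((1 - a) / 2 : ℝ) : ℂ) * E₂ + (((1 + a) / 2 : ℝ) : ℂ) * E₁ - E₃‖
      ≤ ‖(((1 - a) / 2 : ℝ) : ℂ)‖ * ‖E₂‖ + ‖(((1 + a) / 2 : ℝ) : ℂ)‖ * ‖E₁‖ + ‖E₃‖ := step
    _ ≤ (1 + |a|) / 2 * (|x| / N) ^ 2 + (1 + |a|) / 2 * (|x| / N) ^ 2
          + a ^ 2 * (|x| / N) ^ 2 := by linarith
    _ = (1 + |a| + a ^ 2) * (|x| / N) ^ 2 := by ring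

/-- The prototypical superoscillating sequence `F_N(x,a)` converges to `x ↦ e^{iax}`
uniformly on every compact subset of `ℝ`. -/
theorem statement_19 (a : ℝ) (K : Set ℝ) (hK : IsCompact K) :
    TendstoUniformlyOn
      (fun (N : ℕ) (x : ℝ) =>
        ∑ ν ∈ Finset.range (N + 1),
          (N.choose ν : ℂ) * (((1 - a) / 2 : ℝ) : ℂ) ^ ν * (((1 + a) / 2 : ℝ) : ℂ) ^ (N - ν) *
            Complex.exp (Complex.I * ((1 - 2 * (ν : ℝ) / (N : ℝ) : ℝ) : ℂ) * (x : ℂ)))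
      (fun x : ℝ => Complex.exp (Complex.I * (a : ℂ) * (x : ℂ)))
      Filter.atTop K := by
  obtain ⟨M₀, hM₀⟩ := hK.isBounded.exists_norm_le
  set M : ℝ := max M₀ 0 with hMdef
  have hM : ∀ x ∈ K, |x| ≤ M := fun x hx => le_trans (hM₀ x hx) (le_max_left _ _)
  have hM0 : 0 ≤ M := le_max_right _ _
  set D : ℝ := 1 + |a| + a ^ 2 with hD
  have hD0 : 0 < D := by positivity
  set C : ℝ := Real.exp (D * M ^ 2) * (D * M ^ 2) with hC
  rw [Metric.tendstoUniformlyOn_iff]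
  intro ε hε
  have hlim : Filter.Tendsto (fun N : ℕ => C / N) Filter.atTop (nhds 0) :=
    tendsto_const_div_atTop_nhds_zero_nat C
  have hev1 : ∀ᶠ N : ℕ in Filter.atTop, C / N < ε := by
    filter_upwards [hlim.eventually (eventually_lt_nhds hε)] with N h using by simpa using h
  have hev2 : ∀ᶠ N : ℕ in Filter.atTop, M ≤ (N : ℝ) :=
    (tendsto_natCast_atTop_atTop (R := ℝ)).eventually_ge_atTop M
  have hev3 : ∀ᶠ N : ℕ in Filter.atTop, |a| * M ≤ (N : ℝ) :=
    (tendsto_natCast_atTop_atTop (R := ℝ)).eventually_ge_atTop (|a| * M)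
  filter_upwards [hev1, hev2, hev3, Filter.eventually_ge_atTop 1] with N hCN hMN haMN hN1
  intro x hx
  have hNne : N ≠ 0 := by omega
  have hNpos : (0 : ℝ) < N := by exact_mod_cast Nat.pos_of_ne_zero hNne
  have hN' : (N : ℂ) ≠ 0 := Nat.cast_ne_zero.mpr hNne
  have hxM : |x| ≤ M := hM x hx
  have hx1 : |x| / N ≤ 1 := by
    rw [div_le_one hNpos]; exact le_trans hxM hMN
  have hx2 : |a| * (|x| / N) ≤ 1 := by
    rw [← mul_div_assoc, div_le_one hNpos]
    exact le_trans (by gcongr) haMN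
  rw [dist_comm, dist_eq_norm, so_sum_eq_pow a x hNne]
  set g : ℂ := (((1 - a) / 2 : ℝ) : ℂ) * Complex.exp (-(Complex.I * x) / N)
      + (((1 + a) / 2 : ℝ) : ℂ) * Complex.exp ((Complex.I * x) / N) with hg
  set w : ℂ := Complex.exp (Complex.I * a * x / N) with hw
  have harg : (N : ℂ) * (Complex.I * a * x / N) = Complex.I * a * x := by
    rw [mul_comm]
    exact div_mul_cancel₀ _ hN'
  have hwN : w ^ N = Complex.exp (Complex.I * (a : ℂ) * (x : ℂ)) := by
    rw [hw, ← Complex.exp_nat_mul, harg]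
  have hwnorm : ‖w‖ = 1 := by
    rw [hw, show Complex.I * (a : ℂ) * x / N = ((a * x / N : ℝ) : ℂ) * Complex.I from by
      push_cast; ring, Complex.norm_exp_ofReal_mul_I]
  have hclose : ‖g - w‖ ≤ D * (|x| / N) ^ 2 := so_g_close a x hNne hx1 hx2
  have hclose' : ‖g - w‖ ≤ D * M ^ 2 / (N : ℝ) ^ 2 := by
    refine le_trans hclose ?_
    rw [div_pow, ← mul_div_assoc]
    gcongr
  set r : ℝ := 1 + D * M ^ 2 / (N : ℝ) ^ 2 with hr
  have hq0 : 0 ≤ D * M ^ 2 / (N : ℝ) ^ 2 := by positivity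
  have hgr : ‖g‖ ≤ r := by
    calc ‖g‖ = ‖w + (g - w)‖ := by ring_nf
      _ ≤ ‖w‖ + ‖g - w‖ := norm_add_le _ _
      _ ≤ 1 + D * M ^ 2 / (N : ℝ) ^ 2 := by rw [hwnorm]; gcongr
  have hwr : ‖w‖ ≤ r := by rw [hwnorm, hr]; linarith
  have hpow : ‖g ^ N - w ^ N‖ ≤ N * r ^ (N - 1) * ‖g - w‖ := so_pow_sub_pow' hgr hwr hNne
  rw [hwN] at hpow
  have hrexp : r ≤ Real.exp (D * M ^ 2 / (N : ℝ) ^ 2) := by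
    have := Real.add_one_le_exp (D * M ^ 2 / (N : ℝ) ^ 2)
    rw [hr]; linarith
  have hr0 : 0 ≤ r := by rw [hr]; linarith
  have hrm : r ^ (N - 1) ≤ Real.exp (D * M ^ 2) := by
    calc r ^ (N - 1) ≤ Real.exp (D * M ^ 2 / (N : ℝ) ^ 2) ^ (N - 1) := by gcongr
      _ = Real.exp (((N - 1 : ℕ) : ℝ) * (D * M ^ 2 / (N : ℝ) ^ 2)) := by
          rw [Real.exp_nat_mul]
      _ ≤ Real.exp (D * M ^ 2) := by
          apply Real.exp_le_exp.mpr
          have h1 : ((N - 1 : ℕ) : ℝ) ≤ (N : ℝ) := by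
            exact_mod_cast Nat.sub_le N 1
          have h2 : ((N - 1 : ℕ) : ℝ) * (D * M ^ 2 / (N : ℝ) ^ 2)
              ≤ (N : ℝ) * (D * M ^ 2 / (N : ℝ) ^ 2) := by gcongr
          have h3 : (N : ℝ) * (D * M ^ 2 / (N : ℝ) ^ 2) = D * M ^ 2 / (N : ℝ) := by
            field_simp
          have h4 : D * M ^ 2 / (N : ℝ) ≤ D * M ^ 2 := by
            apply div_le_self (by positivity) (by exact_mod_cast hN1)
          linarith
  calc ‖g ^ N - Complex.exp (Complex.I * (a : ℂ) * (x : ℂ))‖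
      ≤ (N : ℝ) * r ^ (N - 1) * ‖g - w‖ := hpow
    _ ≤ (N : ℝ) * Real.exp (D * M ^ 2) * (D * M ^ 2 / (N : ℝ) ^ 2) := by
        gcongr
    _ = C / (N : ℝ) := by rw [hC]; field_simp
    _ < ε := hCN
end
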